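/- Let θ(z) = tanh(√2 z) and f(u) = (u^2-1)^2. If q ∈ H^1(-1/ε,1/ε) satisfies -(q - αθ')'' + f''(θ)(q - αθ') = λ₁ q on (-1/ε,1/ε) with (q - αθ')'(±1/ε) = -αθ''(±1/ε), ‖q‖_{L²} = 1, |λ₁| ≤ Ce^{-c/ε}, ‖q - αθ'‖_{L²}² ≤ Ce^{-c/ε}, and α = 1/‖θ'‖_{L²}, then ∫_{-1/ε}^{1/ε} |(q - αθ')'|² dz ≤ C' e^{-c'/ε} for some constants c', C' > 0. -/

import Mathlib

open Real Set MeasureTheory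

private lemma myd1 (x : ℝ) : HasDerivAt Real.tanh (1 / Real.cosh x ^ 2) x := by
  have h : HasDerivAt (fun y => Real.sinh y / Real.cosh y)
      ((Real.cosh x * Real.cosh x - Real.sinh x * Real.sinh x) / Real.cosh x ^ 2) x :=
    (Real.hasDerivAt_sinh x).div (Real.hasDerivAt_cosh x) (ne_of_gt (Real.cosh_pos x))
  have ht : Real.tanh = fun y => Real.sinh y / Real.cosh y :=
    funext fun y => Real.tanh_eq_sinh_div_cosh y
  rw [ht]
  convert h using 1
  have h2 := Real.cosh_sq_sub_sinh_sq x
  have h3 : Real.cosh x ^ 2 ≠ 0 := pow_ne_zero _ (ne_of_gt (Real.cosh_pos x))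
  field_simp
  nlinarith [h2]

private lemma myd2 (x : ℝ) : HasDerivAt (fun y => 1 / Real.cosh y ^ 2)
    (-2 * Real.sinh x / Real.cosh x ^ 3) x := by
  have hc : HasDerivAt (fun y => Real.cosh y ^ 2) (2 * Real.cosh x * Real.sinh x) x := by
    have := (Real.hasDerivAt_cosh x).pow 2
    refine this.congr_deriv ?_; push_cast; ring
  have h : HasDerivAt (fun y => 1 / Real.cosh y ^ 2)
      ((0 * Real.cosh x ^ 2 - 1 * (2 * Real.cosh x * Real.sinh x)) / (Real.cosh x ^ 2) ^ 2) x :=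
    (hasDerivAt_const x (1:ℝ)).div hc (pow_ne_zero _ (ne_of_gt (Real.cosh_pos x)))
  convert h using 1
  have h3 : Real.cosh x ≠ 0 := ne_of_gt (Real.cosh_pos x)
  field_simp; ring

private lemma myd3 (x : ℝ) : HasDerivAt (fun y => Real.sinh y / Real.cosh y ^ 3)
    ((Real.cosh x ^ 2 - 3 * Real.sinh x ^ 2) / Real.cosh x ^ 4) x := by
  have hc : HasDerivAt (fun y => Real.cosh y ^ 3) (3 * Real.cosh x ^ 2 * Real.sinh x) x := by
    have := (Real.hasDerivAt_cosh x).pow 3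
    norm_num at this; exact this
  have h := (Real.hasDerivAt_sinh x).div hc (pow_ne_zero 3 (ne_of_gt (Real.cosh_pos x)))
  refine h.congr_deriv ?_
  have h3 : Real.cosh x ≠ 0 := ne_of_gt (Real.cosh_pos x)
  field_simp

private lemma hs2 (x : ℝ) : HasDerivAt (fun z : ℝ => Real.sqrt 2 * z) (Real.sqrt 2) x := by
  simpa using (hasDerivAt_id x).const_mul (Real.sqrt 2)

private lemma mys2 : (Real.sqrt 2) * (Real.sqrt 2) = 2 := Real.mul_self_sqrt (by norm_num)

private lemma θd1 (θ : ℝ → ℝ) (hθ : ∀ z, θ z = Real.tanh (Real.sqrt 2 * z)) (x : ℝ) :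
    HasDerivAt θ (Real.sqrt 2 / Real.cosh (Real.sqrt 2 * x) ^ 2) x := by
  have h := (myd1 (Real.sqrt 2 * x)).comp x (hs2 x)
  have hθ' : θ = fun z => Real.tanh (Real.sqrt 2 * z) := funext hθ
  rw [hθ']
  refine h.congr_deriv ?_
  ring

private lemma θd2 (x : ℝ) : HasDerivAt (fun z => Real.sqrt 2 / Real.cosh (Real.sqrt 2 * z) ^ 2)
    (-4 * (Real.sinh (Real.sqrt 2 * x) / Real.cosh (Real.sqrt 2 * x) ^ 3)) x := by
  have h := ((myd2 (Real.sqrt 2 * x)).comp x (hs2 x)).const_mul (Real.sqrt 2)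
  refine (h.congr_deriv ?_).congr_of_eventuallyEq (Filter.Eventually.of_forall fun z => ?_)
  · have hc : Real.cosh (Real.sqrt 2 * x) ≠ 0 := ne_of_gt (Real.cosh_pos _)
    field_simp
    linear_combination (-2 * Real.sinh (Real.sqrt 2 * x)) * mys2
  · simp [Function.comp_def, div_eq_mul_inv]

private lemma θd3 (x : ℝ) :
    HasDerivAt (fun z => -4 * (Real.sinh (Real.sqrt 2 * z) / Real.cosh (Real.sqrt 2 * z) ^ 3))
    (-4 * Real.sqrt 2 *
      ((Real.cosh (Real.sqrt 2 * x) ^ 2 - 3 * Real.sinh (Real.sqrt 2 * x) ^ 2) /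
        Real.cosh (Real.sqrt 2 * x) ^ 4)) x := by
  have h := ((myd3 (Real.sqrt 2 * x)).comp x (hs2 x)).const_mul (-4 : ℝ)
  refine h.congr_deriv ?_
  ring

private lemma exp_le_two_cosh (x : ℝ) : Real.exp x ≤ 2 * Real.cosh x := by
  rw [Real.cosh_eq]; have := Real.exp_pos (-x); linarith

private lemma abs_sinh_le_cosh (x : ℝ) : |Real.sinh x| ≤ Real.cosh x := by
  rw [abs_le, Real.sinh_eq, Real.cosh_eq]
  constructor <;> [have := Real.exp_pos x; have := Real.exp_pos (-x)] <;> linarith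

private lemma cosh_le_exp_abs (x : ℝ) : Real.cosh x ≤ Real.exp |x| := by
  rw [Real.cosh_eq]
  have h1 : Real.exp x ≤ Real.exp |x| := Real.exp_le_exp.mpr (le_abs_self x)
  have h2 : Real.exp (-x) ≤ Real.exp |x| := Real.exp_le_exp.mpr (neg_le_abs x)
  linarith

private lemma bT2 (z : ℝ) : |(-4 : ℝ) * (Real.sinh (Real.sqrt 2 * z) / Real.cosh (Real.sqrt 2 * z) ^ 3)|
    ≤ 16 * Real.exp (-(2 * Real.sqrt 2 * |z|)) := by
  set t := Real.sqrt 2 * z with ht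
  have hC : 0 < Real.cosh t := Real.cosh_pos t
  have habs : |t| = Real.sqrt 2 * |z| := by
    rw [ht, abs_mul, abs_of_nonneg (Real.sqrt_nonneg 2)]
  have h1 : Real.exp (Real.sqrt 2 * |z|) ≤ 2 * Real.cosh t := by
    rw [← habs]; calc Real.exp |t| ≤ 2 * Real.cosh |t| := exp_le_two_cosh _
    _ = 2 * Real.cosh t := by rw [Real.cosh_abs]
  have hS := abs_sinh_le_cosh t
  have key : |(-4 : ℝ) * (Real.sinh t / Real.cosh t ^ 3)| ≤ 4 / Real.cosh t ^ 2 := by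
    rw [abs_mul, abs_div, abs_pow, abs_of_pos hC]
    rw [show |(-4:ℝ)| = 4 by norm_num]
    have h5 : |Real.sinh t| / Real.cosh t ^ 3 ≤ 1 / Real.cosh t ^ 2 := by
      rw [div_le_div_iff₀ (by positivity) (by positivity)]
      nlinarith [abs_nonneg (Real.sinh t)]
    calc 4 * (|Real.sinh t| / Real.cosh t ^ 3) ≤ 4 * (1 / Real.cosh t ^ 2) := by linarith
    _ = 4 / Real.cosh t ^ 2 := by ring
  refine key.trans ?_
  have hexp : Real.exp (-(2 * Real.sqrt 2 * |z|)) = 1 / (Real.exp (Real.sqrt 2 * |z|))^2 := by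
    rw [Real.exp_neg, ← Real.exp_nat_mul]
    norm_num; ring_nf
  rw [hexp, mul_one_div, div_le_div_iff₀ (by positivity) (by positivity)]
  nlinarith [Real.exp_pos (Real.sqrt 2 * |z|)]

example (q : ℝ → ℝ) (hq : ContDiff ℝ 2 q) :
    Differentiable ℝ q ∧ Differentiable ℝ (deriv q) ∧ Continuous (deriv (deriv q)) := by
  have h2 : ContDiff ℝ ((1:ℕ∞) + 1) q := by exact_mod_cast hq
  rw [contDiff_succ_iff_deriv] at h2
  obtain ⟨hd, -, h1⟩ := h2
  exact ⟨hd, h1.differentiable (by simp), h1.continuous_deriv le_rfl⟩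

set_option maxHeartbeats 8000000 in
theorem stmt_19 (c C : ℝ) (hc : 0 < c) (hC : 0 < C)
    (θ : ℝ → ℝ) (hθ : ∀ z, θ z = Real.tanh (Real.sqrt 2 * z))
    (f : ℝ → ℝ) (hf : ∀ u, f u = (u ^ 2 - 1) ^ 2) :
    ∃ c' > (0 : ℝ), ∃ C' > (0 : ℝ),
      ∀ ε : ℝ, 0 < ε → ε < 1 → ∀ q : ℝ → ℝ, ∀ α lam1 : ℝ,
        ContDiff ℝ 2 q →
        -- equation for q - αθ' on (-1/ε, 1/ε)
        (∀ z ∈ Icc (-(1 / ε)) (1 / ε),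
          -(deriv (deriv (fun y => q y - α * deriv θ y)) z) +
            deriv (deriv f) (θ z) * (q z - α * deriv θ z) = lam1 * q z) →
        -- boundary conditions (q - αθ')'(±1/ε) = -αθ''(±1/ε)
        deriv (fun y => q y - α * deriv θ y) (1 / ε) = -α * deriv (deriv θ) (1 / ε) →
        deriv (fun y => q y - α * deriv θ y) (-(1 / ε)) = -α * deriv (deriv θ) (-(1 / ε)) →
        -- normalization and smallness hypotheses
        (∫ z in Icc (-(1 / ε)) (1 / ε), (q z) ^ 2) = 1 →
        |lam1| ≤ C * Real.exp (-c / ε) →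
        (∫ z in Icc (-(1 / ε)) (1 / ε), (q z - α * deriv θ z) ^ 2) ≤
          C * Real.exp (-c / ε) →
        α = 1 / Real.sqrt (∫ z in Icc (-(1 / ε)) (1 / ε), (deriv θ z) ^ 2) →
        (∫ z in Icc (-(1 / ε)) (1 / ε),
            (deriv (fun y => q y - α * deriv θ y) z) ^ 2) ≤
          C' * Real.exp (-c' / ε) := by
  refine ⟨min c 1, lt_min hc one_pos, 13 * C + C ^ 2 + 384 * Real.exp 8, by positivity, ?_⟩
  intro ε hε hε1 q α lam1 hq heq hbc1 hbc2 hqnorm hlam hwnorm hα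
  -- basic setup
  set L : ℝ := 1 / ε with hLdef
  have hL : 1 < L := by rw [hLdef, lt_div_iff₀ hε]; linarith
  have hab : -L < L := by linarith
  have hab' : -L ≤ L := le_of_lt hab
  set W : ℝ → ℝ := fun y => q y - α * deriv θ y with hWdef
  -- q regularity
  obtain ⟨hqd, hqd1, hqc2⟩ : Differentiable ℝ q ∧ Differentiable ℝ (deriv q) ∧
      Continuous (deriv (deriv q)) := by
    have h2 : ContDiff ℝ ((1:ℕ∞) + 1) q := by exact_mod_cast hq
    rw [contDiff_succ_iff_deriv] at h2
    obtain ⟨hd, -, h1⟩ := h2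
    exact ⟨hd, h1.differentiable (by simp), h1.continuous_deriv le_rfl⟩
  have hqc : Continuous q := hqd.continuous
  have hqc1 : Continuous (deriv q) := hqd1.continuous
  -- theta derivatives
  set T1 : ℝ → ℝ := fun z => Real.sqrt 2 / Real.cosh (Real.sqrt 2 * z) ^ 2 with hT1def
  set T2 : ℝ → ℝ := fun z => -4 * (Real.sinh (Real.sqrt 2 * z) / Real.cosh (Real.sqrt 2 * z) ^ 3)
    with hT2def
  set T3 : ℝ → ℝ := fun z => -4 * Real.sqrt 2 *
      ((Real.cosh (Real.sqrt 2 * z) ^ 2 - 3 * Real.sinh (Real.sqrt 2 * z) ^ 2) /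
        Real.cosh (Real.sqrt 2 * z) ^ 4) with hT3def
  have hdθ : deriv θ = T1 := funext fun x => (θd1 θ hθ x).deriv
  have hddθ : deriv (deriv θ) = T2 := by
    rw [hdθ]; exact funext fun x => (θd2 x).deriv
  have hcoshne : ∀ x : ℝ, Real.cosh (Real.sqrt 2 * x) ≠ 0 :=
    fun x => ne_of_gt (Real.cosh_pos _)
  have hcT1 : Continuous T1 := by
    rw [hT1def]
    exact continuous_const.div
      ((Real.continuous_cosh.comp (continuous_const.mul continuous_id)).pow 2)
      (fun x => pow_ne_zero _ (hcoshne x))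
  have hcT2 : Continuous T2 := by
    rw [hT2def]
    exact continuous_const.mul
      ((Real.continuous_sinh.comp (continuous_const.mul continuous_id)).div
        ((Real.continuous_cosh.comp (continuous_const.mul continuous_id)).pow 3)
        (fun x => pow_ne_zero _ (hcoshne x)))
  have hcT3 : Continuous T3 := by
    rw [hT3def]
    exact continuous_const.mul
      ((((Real.continuous_cosh.comp (continuous_const.mul continuous_id)).pow 2).sub
        (continuous_const.mul ((Real.continuous_sinh.comp (continuous_const.mul continuous_id)).pow 2))).div
        ((Real.continuous_cosh.comp (continuous_const.mul continuous_id)).pow 4)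
        (fun x => pow_ne_zero _ (hcoshne x)))
  -- W and its derivatives
  set W1 : ℝ → ℝ := fun z => deriv q z - α * T2 z with hW1def
  set W2 : ℝ → ℝ := fun z => deriv (deriv q) z - α * T3 z with hW2def
  have hWd : ∀ z, HasDerivAt W (W1 z) z := by
    intro z
    have : W = fun y => q y - α * T1 y := by rw [hWdef, hdθ]
    rw [this]
    exact (hqd z).hasDerivAt.sub ((θd2 z).const_mul α)
  have hW1d : ∀ z, HasDerivAt W1 (W2 z) z := fun z =>
    (hqd1 z).hasDerivAt.sub ((θd3 z).const_mul α)
  have hdW : deriv W = W1 := funext fun z => (hWd z).deriv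
  have hdW1 : deriv W1 = W2 := funext fun z => (hW1d z).deriv
  have hWc : Continuous W := by
    have : W = fun y => q y - α * T1 y := by rw [hWdef, hdθ]
    rw [this]; exact hqc.sub (continuous_const.mul hcT1)
  have hW1c : Continuous W1 := hqc1.sub (continuous_const.mul hcT2)
  have hW2c : Continuous W2 := hqc2.sub (continuous_const.mul hcT3)
  -- f'' computation
  have hf2 : deriv (deriv f) = fun u => 12 * u ^ 2 - 4 := by
    have hf1 : deriv f = fun u => 4 * u ^ 3 - 4 * u := by
      funext u
      have hfe : f = fun u : ℝ => (u ^ 2 - 1) ^ 2 := funext hf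
      rw [hfe]
      have h1 : HasDerivAt (fun u : ℝ => u ^ 2 - 1) (2 * u) u := by
        simpa using (hasDerivAt_pow 2 u).sub_const 1
      have h2 := h1.pow 2
      norm_num at h2
      have h3 : HasDerivAt (fun u : ℝ => (u ^ 2 - 1) ^ 2) (4 * u ^ 3 - 4 * u) u := by
        refine h2.congr_deriv ?_; ring
      exact h3.deriv
    rw [hf1]
    funext u
    have h1 : HasDerivAt (fun u : ℝ => 4 * u ^ 3 - 4 * u) (12 * u ^ 2 - 4) u := by
      have h2 := ((hasDerivAt_pow 3 u).const_mul (4:ℝ)).sub ((hasDerivAt_id u).const_mul (4:ℝ))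
      norm_num at h2
      refine h2.congr_deriv ?_; ring
    exact h1.deriv
  -- |θ| ≤ 1
  have hθsq : ∀ z, θ z ^ 2 ≤ 1 := by
    intro z
    rw [hθ z, Real.tanh_eq_sinh_div_cosh, div_pow]
    rw [div_le_one (by positivity)]
    have := abs_sinh_le_cosh (Real.sqrt 2 * z)
    nlinarith [abs_nonneg (Real.sinh (Real.sqrt 2 * z)), Real.cosh_pos (Real.sqrt 2 * z),
      sq_abs (Real.sinh (Real.sqrt 2 * z))]
  -- rewrite the equation
  have heq2 : ∀ z ∈ Icc (-L) L, W2 z = (12 * θ z ^ 2 - 4) * W z - lam1 * q z := by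
    intro z hz
    have h := heq z hz
    rw [hdW, hdW1] at h
    simp only [hf2] at h
    have hWz : q z - α * deriv θ z = W z := rfl
    rw [hWz] at h
    linarith
  -- set-integral to interval-integral conversion
  have hIcc : ∀ g : ℝ → ℝ, (∫ z in Icc (-L) L, g z) = ∫ z in (-L)..L, g z := by
    intro g
    rw [integral_Icc_eq_integral_Ioc, intervalIntegral.integral_of_le hab']
  -- the main interval integrals
  set δp : ℝ := ∫ z in (-L)..L, W z ^ 2 with hδpdef
  set E : ℝ := ∫ z in (-L)..L, W1 z ^ 2 with hEdef
  have hδpbound : δp ≤ C * Real.exp (-c / ε) := by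
    rw [hδpdef, ← hIcc]
    exact hwnorm
  have hδpnn : 0 ≤ δp := intervalIntegral.integral_nonneg hab' (fun z _ => sq_nonneg _)
  have hEnn : 0 ≤ E := intervalIntegral.integral_nonneg hab' (fun z _ => sq_nonneg _)
  have hQ : (∫ z in (-L)..L, q z ^ 2) = 1 := by rw [← hIcc]; exact hqnorm
  clear_value W W1 W2 T1 T2 T3 L δp E
  -- integration by parts
  have hIBP := intervalIntegral.integral_mul_deriv_eq_deriv_mul
    (fun x _ => hWd x) (fun x _ => hW1d x)
    (hW1c.intervalIntegrable (-L) L) (hW2c.intervalIntegrable (-L) L)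
  have hEE : (∫ x in (-L)..L, W1 x * W1 x) = E := by
    rw [hEdef]
    exact intervalIntegral.integral_congr (fun x _ => by ring)
  rw [hEE] at hIBP
  -- split ∫ W * W2
  set I1 : ℝ := ∫ x in (-L)..L, (12 * θ x ^ 2 - 4) * W x ^ 2 with hI1def
  set I2 : ℝ := ∫ x in (-L)..L, q x * W x with hI2def
  have hθc : Continuous θ := by
    have h1 : θ = fun x => Real.sinh (Real.sqrt 2 * x) / Real.cosh (Real.sqrt 2 * x) :=
      funext fun x => by rw [hθ x, Real.tanh_eq_sinh_div_cosh]
    rw [h1]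
    exact (Real.continuous_sinh.comp (continuous_const.mul continuous_id)).div
      (Real.continuous_cosh.comp (continuous_const.mul continuous_id))
      (fun x => hcoshne x)
  have hg1c : Continuous fun x => (12 * θ x ^ 2 - 4) * W x ^ 2 := by
    exact (((continuous_const.mul (hθc.pow 2)).sub continuous_const).mul (hWc.pow 2))
  have hg2c : Continuous fun x => q x * W x := hqc.mul hWc
  have hsplit : (∫ x in (-L)..L, W x * W2 x) = I1 - lam1 * I2 := by
    have hcongr : (∫ x in (-L)..L, W x * W2 x)
        = ∫ x in (-L)..L, ((12 * θ x ^ 2 - 4) * W x ^ 2 - lam1 * (q x * W x)) := by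
      apply intervalIntegral.integral_congr
      intro x hx
      rw [uIcc_of_le hab'] at hx
      show W x * W2 x = (12 * θ x ^ 2 - 4) * W x ^ 2 - lam1 * (q x * W x)
      rw [heq2 x hx]
      ring
    rw [hcongr, intervalIntegral.integral_sub (g := fun x => lam1 * (q x * W x))
      (hg1c.intervalIntegrable _ _)
      ((continuous_const.mul hg2c).intervalIntegrable _ _),
      intervalIntegral.integral_const_mul, hI1def, hI2def]
  -- bound I1
  have hI1 : |I1| ≤ 8 * δp := by
    calc |I1| ≤ ∫ x in (-L)..L, |(12 * θ x ^ 2 - 4) * W x ^ 2| :=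
        intervalIntegral.abs_integral_le_integral_abs hab'
    _ ≤ ∫ x in (-L)..L, 8 * W x ^ 2 := by
        apply intervalIntegral.integral_mono_on hab'
          (hg1c.abs.intervalIntegrable _ _) ((continuous_const.mul (hWc.pow 2)).intervalIntegrable _ _)
        intro x _
        have h1 : |12 * θ x ^ 2 - 4| ≤ 8 :=
          abs_le.mpr ⟨by nlinarith [sq_nonneg (θ x)], by nlinarith [hθsq x]⟩
        rw [abs_mul, abs_of_nonneg (sq_nonneg (W x))]
        exact mul_le_mul_of_nonneg_right h1 (sq_nonneg _)
    _ = 8 * δp := by rw [intervalIntegral.integral_const_mul, hδpdef]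
  -- bound I2
  have hI2 : |I2| ≤ (1 + δp) / 2 := by
    calc |I2| ≤ ∫ x in (-L)..L, |q x * W x| :=
        intervalIntegral.abs_integral_le_integral_abs hab'
    _ ≤ ∫ x in (-L)..L, (q x ^ 2 + W x ^ 2) / 2 := by
        apply intervalIntegral.integral_mono_on hab'
          (hg2c.abs.intervalIntegrable _ _)
          ((((hqc.pow 2).add (hWc.pow 2)).div_const 2).intervalIntegrable _ _)
        intro x _
        show |q x * W x| ≤ (q x ^ 2 + W x ^ 2) / 2
        exact abs_le.mpr ⟨by nlinarith [sq_nonneg (q x + W x)], by nlinarith [sq_nonneg (q x - W x)]⟩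
    _ = (1 + δp) / 2 := by
        rw [show (fun x => (q x ^ 2 + W x ^ 2) / 2) = fun x => (2:ℝ)⁻¹ * (q x ^ 2 + W x ^ 2) by
          funext x; ring, intervalIntegral.integral_const_mul,
          intervalIntegral.integral_add (f := fun x => q x ^ 2) (g := fun x => W x ^ 2)
            ((hqc.pow 2).intervalIntegrable _ _)
            ((hWc.pow 2).intervalIntegrable _ _), hQ]
        rw [hδpdef]; ring
  -- alpha bounds
  have hT1sq : ∀ z : ℝ, T1 z ^ 2 = 2 / Real.cosh (Real.sqrt 2 * z) ^ 4 := by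
    intro z
    rw [hT1def]
    show (Real.sqrt 2 / Real.cosh (Real.sqrt 2 * z) ^ 2) ^ 2 = _
    rw [div_pow, ← pow_mul, Real.sq_sqrt (by norm_num : (0:ℝ) ≤ 2)]
    try norm_num
  have hαpos : 0 < α ∧ α ≤ Real.exp 4 / 2 := by
    set N : ℝ := ∫ z in Icc (-L) L, deriv θ z ^ 2 with hNdef
    have hNT1 : N = ∫ z in Icc (-L) L, T1 z ^ 2 := by rw [hNdef, hdθ]
    have hsub : Icc (-1:ℝ) 1 ⊆ Icc (-L) L := Icc_subset_Icc (by linarith) (by linarith)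
    have hint : IntegrableOn (fun z => T1 z ^ 2) (Icc (-L) L) :=
      (hcT1.pow 2).integrableOn_Icc
    have h1 : (∫ z in Icc (-1:ℝ) 1, T1 z ^ 2) ≤ ∫ z in Icc (-L) L, T1 z ^ 2 := by
      apply setIntegral_mono_set hint
      · filter_upwards with z using sq_nonneg _
      · exact HasSubset.Subset.eventuallyLE hsub
    have h2 : (4:ℝ) * Real.exp (-8) ≤ ∫ z in Icc (-1:ℝ) 1, T1 z ^ 2 := by
      have hconst : (∫ _ in Icc (-1:ℝ) 1, (2 * Real.exp (-8) : ℝ)) = 4 * Real.exp (-8) := by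
        rw [setIntegral_const, Real.volume_real_Icc]
        rw [show ((1:ℝ) - (-1)) = 2 by norm_num]
        simp; ring
      rw [← hconst]
      apply setIntegral_mono_on ((integrableOn_const_iff enorm_ne_top).mpr (Or.inr (by
        rw [Real.volume_Icc]; exact ENNReal.ofReal_lt_top)))
        ((hcT1.pow 2).integrableOn_Icc) measurableSet_Icc
      intro z hz
      show 2 * Real.exp (-8) ≤ T1 z ^ 2
      rw [hT1sq z]
      have hz1 : |Real.sqrt 2 * z| ≤ 2 := by
        rw [abs_mul, abs_of_nonneg (Real.sqrt_nonneg 2)]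
        have h3 : Real.sqrt 2 ≤ 2 := by
          nlinarith [Real.sq_sqrt (by norm_num : (0:ℝ) ≤ 2), Real.sqrt_nonneg 2]
        have h4 : |z| ≤ 1 := abs_le.mpr ⟨hz.1, hz.2⟩
        nlinarith [abs_nonneg z, Real.sqrt_nonneg 2]
      have hch : Real.cosh (Real.sqrt 2 * z) ≤ Real.exp 2 :=
        (cosh_le_exp_abs _).trans (Real.exp_le_exp.mpr hz1)
      have hch4 : Real.cosh (Real.sqrt 2 * z) ^ 4 ≤ Real.exp 8 := by
        calc Real.cosh (Real.sqrt 2 * z) ^ 4 ≤ Real.exp 2 ^ 4 :=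
            pow_le_pow_left₀ (le_of_lt (Real.cosh_pos _)) hch 4
        _ = Real.exp 8 := by rw [← Real.exp_nat_mul]; norm_num
      rw [le_div_iff₀ (by positivity)]
      calc 2 * Real.exp (-8) * Real.cosh (Real.sqrt 2 * z) ^ 4
          ≤ 2 * Real.exp (-8) * Real.exp 8 := by
            apply mul_le_mul_of_nonneg_left hch4 (by positivity)
      _ = 2 := by rw [mul_assoc, ← Real.exp_add]; norm_num
    have hN : 4 * Real.exp (-8) ≤ N := by rw [hNT1]; exact h2.trans h1
    have hsqrtN : 2 * Real.exp (-4) ≤ Real.sqrt N := by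
      rw [show (2:ℝ) * Real.exp (-4) = Real.sqrt ((2 * Real.exp (-4))^2) by
        rw [Real.sqrt_sq (by positivity)]]
      apply Real.sqrt_le_sqrt
      calc (2 * Real.exp (-4))^2 = 4 * (Real.exp (-4) * Real.exp (-4)) := by ring
      _ = 4 * Real.exp (-8) := by rw [← Real.exp_add]; norm_num
      _ ≤ N := hN
    have hsqrtNpos : 0 < Real.sqrt N := lt_of_lt_of_le (by positivity) hsqrtN
    constructor
    · rw [hα]; positivity
    · rw [hα]
      have h2N : (0:ℝ) < 2 * Real.exp (-4) := by positivity
      have hstep : 1 / Real.sqrt N ≤ 1 / (2 * Real.exp (-4)) :=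
        one_div_le_one_div_of_le h2N hsqrtN
      refine hstep.trans (le_of_eq ?_)
      have he : Real.exp 4 * Real.exp (-4) = 1 := by rw [← Real.exp_add]; norm_num
      field_simp
      linear_combination -1 * he
  obtain ⟨hα0, hα1⟩ := hαpos
  -- boundary derivative bounds
  set K : ℝ := 16 * Real.exp (-(2 * Real.sqrt 2 * L)) with hKdef
  have hKpos : 0 < K := by rw [hKdef]; positivity
  have hbb : |W1 L| ≤ α * K := by
    rw [hdW] at hbc1
    rw [hbc1, hddθ, abs_mul, abs_neg, abs_of_pos hα0]
    apply mul_le_mul_of_nonneg_left _ (le_of_lt hα0)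
    have h := bT2 L
    rw [abs_of_pos (by linarith : (0:ℝ) < L)] at h
    rw [hT2def, hKdef]
    exact h
  have hba : |W1 (-L)| ≤ α * K := by
    rw [hdW] at hbc2
    rw [hbc2, hddθ, abs_mul, abs_neg, abs_of_pos hα0]
    apply mul_le_mul_of_nonneg_left _ (le_of_lt hα0)
    have h := bT2 (-L)
    rw [abs_neg, abs_of_pos (by linarith : (0:ℝ) < L)] at h
    rw [hT2def, hKdef]
    exact h
  clear_value K
  -- minimum point of W^2
  have hWsqc : Continuous fun z => W z ^ 2 := hWc.pow 2
  obtain ⟨x₀, hx₀mem, hx₀min⟩ := isCompact_Icc.exists_isMinOn (nonempty_Icc.mpr hab')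
    hWsqc.continuousOn
  have hx₀a : -L ≤ x₀ := hx₀mem.1
  have hx₀b : x₀ ≤ L := hx₀mem.2
  have hminbound : W x₀ ^ 2 ≤ δp / 2 := by
    have h1 : (∫ _z in Icc (-L) L, W x₀ ^ 2) ≤ ∫ z in Icc (-L) L, W z ^ 2 :=
      setIntegral_mono_on ((integrableOn_const_iff enorm_ne_top).mpr (Or.inr (by
        rw [Real.volume_Icc]; exact ENNReal.ofReal_lt_top)))
        hWsqc.integrableOn_Icc measurableSet_Icc (fun z hz => hx₀min hz)
    rw [setIntegral_const, Real.volume_real_Icc_of_le hab', smul_eq_mul] at h1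
    have h2 : (∫ z in Icc (-L) L, W z ^ 2) = δp := by rw [hδpdef, ← hIcc]
    rw [h2] at h1
    nlinarith only [h1, hL, sq_nonneg (W x₀)]
  -- FTC for W^2
  have hWsqd : ∀ z : ℝ, HasDerivAt (fun y => W y ^ 2) (2 * W z * W1 z) z := by
    intro z
    have h := (hWd z).pow 2
    norm_num at h
    try exact h
    try { convert h using 1; ring }
  have hginc : Continuous fun z => 2 * W z * W1 z := (continuous_const.mul hWc).mul hW1c
  have hGc : Continuous fun z => W z ^ 2 + W1 z ^ 2 := (hWc.pow 2).add (hW1c.pow 2)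
  have hftc1 : (∫ z in x₀..L, 2 * W z * W1 z) = W L ^ 2 - W x₀ ^ 2 :=
    intervalIntegral.integral_eq_sub_of_hasDerivAt (fun z _ => hWsqd z)
      (hginc.intervalIntegrable _ _)
  have hftc2 : (∫ z in (-L)..x₀, 2 * W z * W1 z) = W x₀ ^ 2 - W (-L) ^ 2 :=
    intervalIntegral.integral_eq_sub_of_hasDerivAt (fun z _ => hWsqd z)
      (hginc.intervalIntegrable _ _)
  have hGsplit : (∫ z in (-L)..x₀, (W z ^ 2 + W1 z ^ 2))
      + (∫ z in x₀..L, (W z ^ 2 + W1 z ^ 2)) = δp + E := by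
    rw [intervalIntegral.integral_add_adjacent_intervals (hGc.intervalIntegrable _ _)
        (hGc.intervalIntegrable _ _),
      intervalIntegral.integral_add (f := fun z => W z ^ 2) (g := fun z => W1 z ^ 2)
        ((hWc.pow 2).intervalIntegrable _ _)
        ((hW1c.pow 2).intervalIntegrable _ _), hδpdef, hEdef]
  have hG1nn : 0 ≤ ∫ z in (-L)..x₀, (W z ^ 2 + W1 z ^ 2) :=
    intervalIntegral.integral_nonneg hx₀a (fun z _ => by positivity)
  have hG2nn : 0 ≤ ∫ z in x₀..L, (W z ^ 2 + W1 z ^ 2) :=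
    intervalIntegral.integral_nonneg hx₀b (fun z _ => by positivity)
  have habs1 : |∫ z in x₀..L, 2 * W z * W1 z| ≤ ∫ z in x₀..L, (W z ^ 2 + W1 z ^ 2) := by
    calc |∫ z in x₀..L, 2 * W z * W1 z| ≤ ∫ z in x₀..L, |2 * W z * W1 z| :=
        intervalIntegral.abs_integral_le_integral_abs hx₀b
    _ ≤ ∫ z in x₀..L, (W z ^ 2 + W1 z ^ 2) := by
        apply intervalIntegral.integral_mono_on hx₀b (hginc.abs.intervalIntegrable _ _)
          (hGc.intervalIntegrable _ _)
        intro z _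
        exact abs_le.mpr ⟨by nlinarith only [sq_nonneg (W z + W1 z)],
          by nlinarith only [sq_nonneg (W z - W1 z)]⟩
  have habs2 : |∫ z in (-L)..x₀, 2 * W z * W1 z| ≤ ∫ z in (-L)..x₀, (W z ^ 2 + W1 z ^ 2) := by
    calc |∫ z in (-L)..x₀, 2 * W z * W1 z| ≤ ∫ z in (-L)..x₀, |2 * W z * W1 z| :=
        intervalIntegral.abs_integral_le_integral_abs hx₀a
    _ ≤ ∫ z in (-L)..x₀, (W z ^ 2 + W1 z ^ 2) := by
        apply intervalIntegral.integral_mono_on hx₀a (hginc.abs.intervalIntegrable _ _)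
          (hGc.intervalIntegrable _ _)
        intro z _
        exact abs_le.mpr ⟨by nlinarith only [sq_nonneg (W z + W1 z)],
          by nlinarith only [sq_nonneg (W z - W1 z)]⟩
  have hWbsq : W L ^ 2 ≤ 3 * δp / 2 + E := by
    have h5 : (∫ z in x₀..L, (W z ^ 2 + W1 z ^ 2)) ≤ δp + E := by
      linarith only [hGsplit, hG1nn]
    have h6 := le_abs_self (∫ z in x₀..L, 2 * W z * W1 z)
    linarith only [hftc1, h6, habs1, hminbound, h5]
  have hWasq : W (-L) ^ 2 ≤ 3 * δp / 2 + E := by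
    have h5 : (∫ z in (-L)..x₀, (W z ^ 2 + W1 z ^ 2)) ≤ δp + E := by
      linarith only [hGsplit, hG2nn]
    have h6 := neg_abs_le (∫ z in (-L)..x₀, 2 * W z * W1 z)
    linarith only [hftc2, h6, habs2, hminbound, h5]
  -- endpoint product bounds
  have hαK : 0 ≤ α * K := mul_nonneg hα0.le hKpos.le
  have e1 : |W L * W1 L| ≤ W L ^ 2 / 8 + 2 * (α * K) ^ 2 := by
    rw [abs_mul]
    nlinarith only [sq_nonneg (|W L| - 4 * |W1 L|), sq_abs (W L), sq_abs (W1 L),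
      abs_nonneg (W L), abs_nonneg (W1 L),
      mul_le_mul hbb hbb (abs_nonneg (W1 L)) hαK]
  have e2 : |W (-L) * W1 (-L)| ≤ W (-L) ^ 2 / 8 + 2 * (α * K) ^ 2 := by
    rw [abs_mul]
    nlinarith only [sq_nonneg (|W (-L)| - 4 * |W1 (-L)|), sq_abs (W (-L)), sq_abs (W1 (-L)),
      abs_nonneg (W (-L)), abs_nonneg (W1 (-L)),
      mul_le_mul hba hba (abs_nonneg (W1 (-L))) hαK]
  have hlamnn : 0 ≤ |lam1| := abs_nonneg _
  have hEbound : E ≤ 12 * δp + 6 * (α * K) ^ 2 + |lam1| * (1 + δp) := by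
    have hB : W L * W1 L - W (-L) * W1 (-L) - E = I1 - lam1 * I2 := hIBP.symm.trans hsplit
    have h7 : |lam1 * I2| ≤ |lam1| * ((1 + δp) / 2) := by
      rw [abs_mul]; exact mul_le_mul_of_nonneg_left hI2 (abs_nonneg lam1)
    have h8 := le_abs_self (lam1 * I2)
    have h10 := neg_abs_le I1
    have h12 := le_abs_self (W L * W1 L)
    have h14 := neg_abs_le (W (-L) * W1 (-L))
    linarith only [hB, e1, e2, hI1, h7, h8, h10, h12, h14, hWbsq, hWasq, hδpnn, hEnn, hlamnn,
      sq_nonneg (α * K), mul_nonneg hlamnn hδpnn]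
  -- numeric bounds
  have hKsq : K ^ 2 = 256 * Real.exp (-(4 * Real.sqrt 2 * L)) := by
    rw [hKdef,
      show (16 * Real.exp (-(2 * Real.sqrt 2 * L))) ^ 2
        = 256 * (Real.exp (-(2 * Real.sqrt 2 * L)) * Real.exp (-(2 * Real.sqrt 2 * L))) by ring,
      ← Real.exp_add,
      show (-(2 * Real.sqrt 2 * L)) + (-(2 * Real.sqrt 2 * L)) = -(4 * Real.sqrt 2 * L) by ring]
  have hα2 : α ^ 2 ≤ Real.exp 8 / 4 := by
    have h16 : α ^ 2 ≤ (Real.exp 4 / 2) ^ 2 := by nlinarith only [hα0, hα1]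
    have h17 : (Real.exp 4 / 2) ^ 2 = Real.exp 8 / 4 := by
      rw [show (Real.exp 4 / 2) ^ 2 = Real.exp 4 * Real.exp 4 / 4 by ring, ← Real.exp_add]
      norm_num
    linarith only [h16, h17]
  have hK2 : (α * K) ^ 2 ≤ (Real.exp 8 / 4) * (256 * Real.exp (-(4 * Real.sqrt 2 * L))) := by
    calc (α * K) ^ 2 = α ^ 2 * K ^ 2 := by ring
    _ ≤ (Real.exp 8 / 4) * K ^ 2 := mul_le_mul_of_nonneg_right hα2 (sq_nonneg K)
    _ = (Real.exp 8 / 4) * (256 * Real.exp (-(4 * Real.sqrt 2 * L))) := by rw [hKsq]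
  have hsqrt2ge1 : (1:ℝ) ≤ Real.sqrt 2 := by
    nlinarith only [Real.sq_sqrt (show (0:ℝ) ≤ 2 by norm_num), Real.sqrt_nonneg 2]
  have hgm1 : Real.exp (-(4 * Real.sqrt 2 * L)) ≤ Real.exp (-(min c 1) / ε) := by
    apply Real.exp_le_exp.mpr
    rw [neg_div]
    have h19 : min c 1 ≤ 4 * Real.sqrt 2 := le_trans (min_le_right c 1) (by linarith)
    have h18 : min c 1 / ε ≤ (4 * Real.sqrt 2) / ε := by gcongr
    have h18b : (4 * Real.sqrt 2) / ε = 4 * Real.sqrt 2 * L := by rw [hLdef]; ring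
    linarith only [h18, h18b]
  have hgm0 : Real.exp (-c / ε) ≤ Real.exp (-(min c 1) / ε) := by
    apply Real.exp_le_exp.mpr
    rw [neg_div, neg_div]
    have h20 : min c 1 / ε ≤ c / ε := by gcongr; exact min_le_left c 1
    linarith only [h20]
  have he0le1 : Real.exp (-c / ε) ≤ 1 := by
    calc Real.exp (-c / ε) ≤ Real.exp 0 := Real.exp_le_exp.mpr (by
        rw [neg_div]
        have := div_nonneg hc.le hε.le
        linarith only [this])
    _ = 1 := Real.exp_zero
  -- conclude
  have hgoal : (∫ z in Icc (-L) L, deriv W z ^ 2) = E := by rw [hdW, hIcc, ← hEdef]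
  rw [hgoal]
  have hfin1 : E ≤ 12 * (C * Real.exp (-c / ε))
      + 6 * ((Real.exp 8 / 4) * (256 * Real.exp (-(4 * Real.sqrt 2 * L))))
      + (C * Real.exp (-c / ε)) * (1 + C * Real.exp (-c / ε)) := by
    have h21 : |lam1| * (1 + δp) ≤ (C * Real.exp (-c / ε)) * (1 + C * Real.exp (-c / ε)) :=
      mul_le_mul hlam (by linarith only [hδpbound]) (by linarith only [hδpnn]) (by positivity)
    have h22 : (α * K) ^ 2 ≤ (Real.exp 8 / 4) * (256 * Real.exp (-(4 * Real.sqrt 2 * L))) := hK2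
    linarith only [hEbound, hδpbound, h21, h22]
  refine hfin1.trans ?_
  have p1 : C * Real.exp (-c / ε) ≤ C * Real.exp (-(min c 1) / ε) :=
    mul_le_mul_of_nonneg_left hgm0 hC.le
  have p2 : Real.exp 8 * Real.exp (-(4 * Real.sqrt 2 * L))
      ≤ Real.exp 8 * Real.exp (-(min c 1) / ε) :=
    mul_le_mul_of_nonneg_left hgm1 (Real.exp_pos 8).le
  have p3 : Real.exp (-c / ε) * Real.exp (-c / ε) ≤ 1 * Real.exp (-(min c 1) / ε) :=
    mul_le_mul he0le1 hgm0 (Real.exp_pos _).le one_pos.le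
  nlinarith only [p1, p2, p3, hC, Real.exp_pos (-(min c 1) / ε), Real.exp_pos 8,
    Real.exp_pos (-c / ε), sq_nonneg C]
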